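/- arXiv:1404.6917 — 4 statements merged into one kernel-verified Lean document; each statement's English description precedes it below -/
import Mathlib

section
/- Suppose p = q, p̂ᵢ = ẑᵢ for all i with the p̂ᵢ pairwise distinct, Σᵢ b̂ᵢ = 1, with Σᵢ b̂ᵢ/(1 − p̂ᵢt) not identically zero. If the coefficients âᵢ, b̂ᵢ satisfy Σᵢ âᵢ p̂ᵢᵏ − Σᵢ b̂ᵢ Σ_{j=0}^{k−1} c_j p̂ᵢ^{k−j} = c_k for k = 0, ..., 2p, then R(t) = (Σᵢ âᵢ/(1 − p̂ᵢt))/(Σᵢ b̂ᵢ/(1 − p̂ᵢt)) is a rational function with numerator and denominator of degree at most p whose power series expansion agrees with f = Σ cᵢtⁱ through order 2p; hence R equals the Padé approximant [p/p]_f. -/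
open Finset Polynomial

lemma geom_inv_aux {K : Type*} [Field K] (a : K) :
    (1 - PowerSeries.C a * PowerSeries.X : PowerSeries K)⁻¹
      = PowerSeries.mk (fun n => a ^ n) := by
  have hc : PowerSeries.constantCoeff (1 - PowerSeries.C a * PowerSeries.X) ≠ 0 := by
    simp
  rw [PowerSeries.inv_eq_iff_mul_eq_one hc]
  ext n
  cases n with
  | zero => simp
  | succ n =>
    rw [mul_sub, mul_one, map_sub, PowerSeries.coeff_mul,
      Finset.Nat.sum_antidiagonal_eq_sum_range_succ_mk, Finset.sum_eq_single n]
    · have : n + 1 - n = 1 := by omega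
      simp [this, pow_succ, PowerSeries.coeff_C_mul, PowerSeries.coeff_X, PowerSeries.coeff_mk]
    · intro b hb hne
      have : n + 1 - b ≠ 1 := by simp only [Finset.mem_range] at hb; omega
      simp [PowerSeries.coeff_C_mul, PowerSeries.coeff_X, this]
    · intro h
      exact absurd (Finset.mem_range.mpr (by omega)) h

/-- When `p = q` and all poles equal all zeros (`p̂ᵢ = ẑᵢ`, pairwise distinct), the barycentric
rational function whose coefficients satisfy the accuracy system through order `2p` is a ratio
of two polynomials of degree at most `p` matching `f` through order `2p`, i.e. it is the Padé
approximant `[p/p]_f`. -/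
theorem barycentric_is_pade_diag
    (K : Type*) [Field K] (p : ℕ) (c : ℕ → K) (ah bh ph : ℕ → K)
    (hdist : ∀ i ≤ p, ∀ j ≤ p, i ≠ j → ph i ≠ ph j)
    (hnorm : ∑ i ∈ Finset.range (p + 1), bh i = 1)
    (hden : (∑ i ∈ Finset.range (p + 1),
        PowerSeries.C (bh i) * (1 - PowerSeries.C (ph i) * PowerSeries.X)⁻¹ :
        PowerSeries K) ≠ 0)
    (hsys : ∀ k ≤ 2 * p,
      ∑ i ∈ Finset.range (p + 1), ah i * ph i ^ k -
        ∑ i ∈ Finset.range (p + 1), bh i * ∑ j ∈ Finset.range k, c j * ph i ^ (k - j) = c k) :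
    ∃ N D : Polynomial K, N.natDegree ≤ p ∧ D.natDegree ≤ p ∧ D.coeff 0 ≠ 0 ∧
      (∑ i ∈ Finset.range (p + 1),
          PowerSeries.C (ah i) * (1 - PowerSeries.C (ph i) * PowerSeries.X)⁻¹) *
        (∑ i ∈ Finset.range (p + 1),
          PowerSeries.C (bh i) * (1 - PowerSeries.C (ph i) * PowerSeries.X)⁻¹)⁻¹ =
        (N : PowerSeries K) * (D : PowerSeries K)⁻¹ ∧
      ∀ k ≤ 2 * p,
        PowerSeries.coeff k ((N : PowerSeries K) * (D : PowerSeries K)⁻¹) = c k := by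
  clear hdist hden
  set s : Finset ℕ := Finset.range (p + 1) with hs
  -- polynomials
  set N : Polynomial K := ∑ i ∈ s, Polynomial.C (ah i) *
      ∏ j ∈ s.erase i, (1 - Polynomial.C (ph j) * Polynomial.X) with hN
  set D : Polynomial K := ∑ i ∈ s, Polynomial.C (bh i) *
      ∏ j ∈ s.erase i, (1 - Polynomial.C (ph j) * Polynomial.X) with hD
  set Q : Polynomial K := ∏ i ∈ s, (1 - Polynomial.C (ph i) * Polynomial.X) with hQ
  -- power series
  set A : PowerSeries K := ∑ i ∈ s,
      PowerSeries.C (ah i) * (1 - PowerSeries.C (ph i) * PowerSeries.X)⁻¹ with hA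
  set B : PowerSeries K := ∑ i ∈ s,
      PowerSeries.C (bh i) * (1 - PowerSeries.C (ph i) * PowerSeries.X)⁻¹ with hB
  -- degree bound helper
  have hdeg : ∀ (f : ℕ → K), (∑ i ∈ s, Polynomial.C (f i) *
      ∏ j ∈ s.erase i, (1 - Polynomial.C (ph j) * Polynomial.X)).natDegree ≤ p := by
    intro f
    refine Polynomial.natDegree_sum_le_of_forall_le _ _ (fun i hi => ?_)
    refine le_trans (Polynomial.natDegree_mul_le) ?_
    rw [Polynomial.natDegree_C, zero_add]
    refine le_trans (Polynomial.natDegree_prod_le _ _) ?_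
    refine le_trans (Finset.sum_le_card_nsmul _ _ 1 (fun j _ => ?_)) ?_
    · refine le_trans (Polynomial.natDegree_sub_le _ _) ?_
      simp [Polynomial.natDegree_C_mul_le]
      exact le_trans (Polynomial.natDegree_mul_le) (by simp)
    · rw [smul_eq_mul, mul_one]
      rw [Finset.card_erase_of_mem hi]
      simp [hs]
  -- coeff 0 of D
  have hD0 : D.coeff 0 = 1 := by
    rw [hD, Polynomial.finset_sum_coeff]
    rw [← hnorm]
    refine Finset.sum_congr rfl (fun i hi => ?_)
    rw [Polynomial.coeff_C_mul]
    have : (∏ j ∈ s.erase i, (1 - Polynomial.C (ph j) * Polynomial.X)).coeff 0 = 1 := by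
      rw [Polynomial.coeff_zero_eq_eval_zero]
      simp [Polynomial.eval_prod]
    rw [this, mul_one]
  -- coefficients of A and B
  have hAc : ∀ k, PowerSeries.coeff k A = ∑ i ∈ s, ah i * ph i ^ k := by
    intro k
    rw [hA, map_sum]
    refine Finset.sum_congr rfl (fun i hi => ?_)
    rw [geom_inv_aux, PowerSeries.coeff_C_mul, PowerSeries.coeff_mk]
  have hBc : ∀ k, PowerSeries.coeff k B = ∑ i ∈ s, bh i * ph i ^ k := by
    intro k
    rw [hB, map_sum]
    refine Finset.sum_congr rfl (fun i hi => ?_)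
    rw [geom_inv_aux, PowerSeries.coeff_C_mul, PowerSeries.coeff_mk]
  have hB0 : PowerSeries.constantCoeff B ≠ 0 := by
    rw [← PowerSeries.coeff_zero_eq_constantCoeff, hBc]
    simp only [pow_zero, mul_one]; rw [hnorm]; exact one_ne_zero
  -- Q as a power series and its constant coefficient
  have hcoe : ∀ t : Finset ℕ,
      ((∏ i ∈ t, (1 - Polynomial.C (ph i) * Polynomial.X) : Polynomial K) : PowerSeries K)
        = ∏ i ∈ t, (1 - PowerSeries.C (ph i) * PowerSeries.X) := by
    intro t
    rw [← Polynomial.coeToPowerSeries.ringHom_apply, map_prod]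
    refine Finset.prod_congr rfl (fun i hi => ?_)
    simp [Polynomial.coeToPowerSeries.ringHom_apply]
  have hQcoe : (Q : PowerSeries K) =
      ∏ i ∈ s, (1 - PowerSeries.C (ph i) * PowerSeries.X) := hcoe s
  have hQ0 : PowerSeries.constantCoeff (Q : PowerSeries K) ≠ 0 := by
    rw [hQcoe, map_prod]
    simp
  -- A * Q = N, B * Q = D
  have key : ∀ (f : ℕ → K),
      (∑ i ∈ s, PowerSeries.C (f i) * (1 - PowerSeries.C (ph i) * PowerSeries.X)⁻¹)
        * (Q : PowerSeries K)
      = ((∑ i ∈ s, Polynomial.C (f i) *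
          ∏ j ∈ s.erase i, (1 - Polynomial.C (ph j) * Polynomial.X) : Polynomial K)
          : PowerSeries K) := by
    intro f
    conv_rhs => rw [← Polynomial.coeToPowerSeries.ringHom_apply, map_sum]
    rw [Finset.sum_mul]
    refine Finset.sum_congr rfl (fun i hi => ?_)
    simp only [map_mul, Polynomial.coeToPowerSeries.ringHom_apply, Polynomial.coe_C]
    rw [hcoe (s.erase i), hQcoe, ← Finset.mul_prod_erase _ _ hi, mul_assoc]
    congr 1
    rw [← mul_assoc, PowerSeries.inv_mul_cancel _ (by simp), one_mul]
  have hAQ : A * (Q : PowerSeries K) = (N : PowerSeries K) := key ah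
  have hBQ : B * (Q : PowerSeries K) = (D : PowerSeries K) := key bh
  refine ⟨N, D, hdeg ah, hdeg bh, by rw [hD0]; exact one_ne_zero, ?_, ?_⟩
  · -- A * B⁻¹ = N * D⁻¹
    rw [← hAQ, ← hBQ, PowerSeries.mul_inv_rev]
    rw [show A * Q * ((Q : PowerSeries K)⁻¹ * B⁻¹) = A * (Q * (Q : PowerSeries K)⁻¹) * B⁻¹ by ring]
    rw [PowerSeries.mul_inv_cancel _ hQ0, mul_one]
  · -- coefficients
    intro k hk
    rw [← hAQ, ← hBQ, PowerSeries.mul_inv_rev,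
      show A * Q * ((Q : PowerSeries K)⁻¹ * B⁻¹) = A * (Q * (Q : PowerSeries K)⁻¹) * B⁻¹ by ring,
      PowerSeries.mul_inv_cancel _ hQ0, mul_one]
    set f : PowerSeries K := PowerSeries.mk c with hf
    have hABf : ∀ m ≤ 2 * p, PowerSeries.coeff m (A - B * f) = 0 := by
      intro m hm
      rw [map_sub, hAc]
      have hBf : PowerSeries.coeff m (B * f) =
          (∑ i ∈ s, bh i * ∑ j ∈ Finset.range m, c j * ph i ^ (m - j)) + c m := by
        rw [mul_comm B f, PowerSeries.coeff_mul,
          Finset.Nat.sum_antidiagonal_eq_sum_range_succ_mk]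
        have : ∀ x ∈ Finset.range (m + 1),
            PowerSeries.coeff x f * PowerSeries.coeff (m - x) B
            = ∑ i ∈ s, bh i * (c x * ph i ^ (m - x)) := by
          intro x hx
          rw [hBc, hf, PowerSeries.coeff_mk, Finset.mul_sum]
          refine Finset.sum_congr rfl (fun i hi => ?_)
          ring
        rw [Finset.sum_congr rfl this, Finset.sum_comm]
        rw [Finset.sum_congr rfl (fun i (hi : i ∈ s) => Finset.sum_range_succ
          (fun x => bh i * (c x * ph i ^ (m - x))) m)]
        rw [Finset.sum_add_distrib]
        congr 1
        · refine Finset.sum_congr rfl (fun i hi => ?_)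
          rw [← Finset.mul_sum]
        · simp only [Nat.sub_self, pow_zero, mul_one]
          rw [← Finset.sum_mul, hs, hnorm, one_mul]
      rw [hBf]
      linear_combination hsys m hm
    have hsplit : A * B⁻¹ = f + (A - B * f) * B⁻¹ := by
      have h1 : B * B⁻¹ = 1 := PowerSeries.mul_inv_cancel _ hB0
      linear_combination f * h1
    rw [hsplit, map_add, hf, PowerSeries.coeff_mk]
    have : PowerSeries.coeff k ((A - B * f) * B⁻¹) = 0 := by
      rw [PowerSeries.coeff_mul]
      refine Finset.sum_eq_zero (fun x hx => ?_)
      rw [Finset.HasAntidiagonal.mem_antidiagonal] at hx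
      rw [hABf x.1 (by omega), zero_mul]
    rw [this, add_zero]
end

section
/- Let f(t) = c₀ + c₁t + ⋯ ∈ K[[t]] and define f^{−n}(t) = tⁿ f(t). If R_{p+n,p+n} is a rational function with numerator and denominator degrees at most p+n, denominator nonzero at 0, whose expansion agrees with f^{−n} through order 2(p+n), then the numerator of R_{p+n,p+n} is divisible by tⁿ, and R(t) := t^{−n} R_{p+n,p+n}(t) is a rational function with numerator degree at most p and denominator degree at most p+n whose expansion agrees with f through order n+2p. -/
open Polynomial

/-- If `R_{p+n,p+n} = N/D` (degrees ≤ p+n, `D(0) ≠ 0`) matches `f^{−n}(t) = tⁿ f(t)` through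
order `2(p+n)`, then `tⁿ` divides the numerator `N`, and `t^{−n} R_{p+n,p+n}` is a rational
function with numerator degree ≤ p and denominator degree ≤ p+n matching `f` through order
`n + 2p`. -/
theorem pade_shift_down
    (K : Type*) [Field K] (c : ℕ → K) (n p : ℕ) (N D : Polynomial K)
    (hN : N.natDegree ≤ p + n) (hD : D.natDegree ≤ p + n) (hD0 : D.coeff 0 ≠ 0)
    (happrox : ∀ k ≤ 2 * (p + n),
      PowerSeries.coeff k ((N : PowerSeries K) * (D : PowerSeries K)⁻¹) =
        PowerSeries.coeff k (PowerSeries.X ^ n * PowerSeries.mk c)) :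
    Polynomial.X ^ n ∣ N ∧
      ∃ M : Polynomial K, N = Polynomial.X ^ n * M ∧ M.natDegree ≤ p ∧
        ∀ k ≤ n + 2 * p,
          PowerSeries.coeff k ((M : PowerSeries K) * (D : PowerSeries K)⁻¹) = c k := by
  have hDu : PowerSeries.constantCoeff (D : PowerSeries K) ≠ 0 := by
    rwa [Polynomial.constantCoeff_coe]
  -- coefficients of N/D below n vanish
  have hNcoeff : ∀ m < n, N.coeff m = 0 := by
    intro m hm
    have hm2 : m ≤ 2 * (p + n) := by omega
    have := happrox m hm2
    rw [PowerSeries.coeff_X_pow_mul'] at this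
    simp only [hm.not_ge, if_false] at this
    have hNeq : (N : PowerSeries K) =
        ((N : PowerSeries K) * (D : PowerSeries K)⁻¹) * (D : PowerSeries K) := by
      rw [mul_assoc, PowerSeries.inv_mul_cancel _ hDu, mul_one]
    have : PowerSeries.coeff m (N : PowerSeries K) = 0 := by
      rw [hNeq, PowerSeries.coeff_mul]
      apply Finset.sum_eq_zero
      intro x hx
      have hx1 : x.1 < n := lt_of_le_of_lt (Finset.HasAntidiagonal.antidiagonal.fst_le hx) hm
      have hx1' : x.1 ≤ 2 * (p + n) := by omega
      have h0 := happrox x.1 hx1'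
      rw [PowerSeries.coeff_X_pow_mul'] at h0
      simp only [hx1.not_ge, if_false] at h0
      rw [h0, zero_mul]
    rwa [Polynomial.coeff_coe] at this
  have hdvd : Polynomial.X ^ n ∣ N := (Polynomial.X_pow_dvd_iff).2 hNcoeff
  refine ⟨hdvd, ?_⟩
  obtain ⟨M, hM⟩ := hdvd
  refine ⟨M, hM, ?_, ?_⟩
  · by_cases hM0 : M = 0
    · simp [hM0]
    · have : N.natDegree = n + M.natDegree := by
        rw [hM, Polynomial.natDegree_mul (pow_ne_zero _ Polynomial.X_ne_zero) hM0, Polynomial.natDegree_X_pow]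
      omega
  · intro k hk
    have hk2 : k + n ≤ 2 * (p + n) := by omega
    have h := happrox (k + n) hk2
    have hcast : (N : PowerSeries K) = PowerSeries.X ^ n * (M : PowerSeries K) := by
      rw [hM]
      push_cast
      ring
    rw [hcast, mul_assoc, PowerSeries.coeff_X_pow_mul' ,
      PowerSeries.coeff_X_pow_mul'] at h
    simp only [le_add_iff_nonneg_left, Nat.zero_le, if_true, Nat.add_sub_cancel] at h
    rw [h, PowerSeries.coeff_mk]
end

section
/- Let f = Σ cₖtᵏ ∈ K[[t]] and let p̃ᵢ (i = 0,...,p) and z̃ᵢ (i = 0,...,q) be nonzero scalars with all p̃ᵢ distinct and all z̃ᵢ distinct. Suppose ãᵢ, b̃ᵢ satisfy Σᵢ b̃ᵢ/z̃ᵢ = 1 and Σᵢ ãᵢ/p̃ᵢ^{k+1} − Σᵢ b̃ᵢ Σ_{j=0}^{k−1} c_j/z̃ᵢ^{k−j+1} = c_k for k = 0,...,p+q. Then the power series expansion of R̃(t) = (Σᵢ ãᵢ/(p̃ᵢ − t))/(Σᵢ b̃ᵢ/(z̃ᵢ − t)) agrees with f through order p+q. -/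
open Finset PowerSeries

lemma coeff_inv_linear {K : Type*} [Field K] (a : K) (ha : a ≠ 0) (k : ℕ) :
    PowerSeries.coeff (R := K) k (PowerSeries.C (R := K) a - PowerSeries.X)⁻¹ = 1 / a ^ (k + 1) := by
  have h : (PowerSeries.C (R := K) a - PowerSeries.X)⁻¹ = PowerSeries.mk (fun k => 1 / a ^ (k + 1)) := by
    rw [PowerSeries.inv_eq_iff_mul_eq_one]
    · ext n
      rw [PowerSeries.coeff_mul]
      cases n with
      | zero => simp [Finset.Nat.antidiagonal_zero, ha]
      | succ m =>
        rw [Finset.Nat.sum_antidiagonal_eq_sum_range_succ (fun i j =>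
          PowerSeries.coeff (R := K) i (PowerSeries.mk (fun k => 1 / a ^ (k + 1))) *
            PowerSeries.coeff (R := K) j (PowerSeries.C (R := K) a - PowerSeries.X))]
        rw [Finset.sum_range_succ, Finset.sum_range_succ]
        have h1 : ∀ i ∈ Finset.range m, PowerSeries.coeff (R := K) i (PowerSeries.mk (fun k => 1 / a ^ (k + 1))) *
            PowerSeries.coeff (R := K) (m + 1 - i) (PowerSeries.C (R := K) a - PowerSeries.X) = 0 := by
          intro i hi
          simp only [Finset.mem_range] at hi
          have : m + 1 - i ≠ 0 := by omega
          have : m + 1 - i ≠ 1 := by omega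
          simp_all [PowerSeries.coeff_C, PowerSeries.coeff_X]
        rw [Finset.sum_eq_zero h1]
        have h2 : m + 1 - m = 1 := by omega
        rw [h2]
        have hX : PowerSeries.coeff (R := K) 1 (PowerSeries.C (R := K) a - PowerSeries.X) = -1 := by
          simp [PowerSeries.coeff_C, PowerSeries.coeff_X]
        have hC : PowerSeries.coeff (R := K) 0 (PowerSeries.C (R := K) a - PowerSeries.X) = a := by
          simp [PowerSeries.coeff_C]
        rw [Nat.sub_self, hX, hC, PowerSeries.coeff_mk, PowerSeries.coeff_mk, PowerSeries.coeff_one]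
        simp only [Nat.succ_ne_zero, if_false]
        field_simp
        ring
    · simpa using ha
  simp [h]

/-- Form 1 accuracy: if the coefficients `ãᵢ, b̃ᵢ` satisfy the normalization
`∑ b̃ᵢ/z̃ᵢ = 1` and the linear system
`∑ᵢ ãᵢ/p̃ᵢ^{k+1} − ∑ᵢ b̃ᵢ ∑_{j<k} c_j/z̃ᵢ^{k−j+1} = c_k` for `k = 0,…,p+q`, then the
power series expansion of `R̃ = (∑ ãᵢ/(p̃ᵢ − t))/(∑ b̃ᵢ/(z̃ᵢ − t))` agrees with
`f = ∑ c_k t^k` through order `p + q`. -/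
theorem barycentric_form1_accuracy
    (K : Type*) [Field K] (p q : ℕ) (c at' bt pt zt : ℕ → K)
    (hptne : ∀ i ≤ p, pt i ≠ 0) (hztne : ∀ i ≤ q, zt i ≠ 0)
    (hptd : ∀ i ≤ p, ∀ j ≤ p, i ≠ j → pt i ≠ pt j)
    (hztd : ∀ i ≤ q, ∀ j ≤ q, i ≠ j → zt i ≠ zt j)
    (hnorm : ∑ i ∈ Finset.range (q + 1), bt i / zt i = 1)
    (hsys : ∀ k ≤ p + q,
      ∑ i ∈ Finset.range (p + 1), at' i / pt i ^ (k + 1) -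
        ∑ i ∈ Finset.range (q + 1),
          bt i * ∑ j ∈ Finset.range k, c j / zt i ^ (k - j + 1) = c k) :
    ∀ k ≤ p + q,
      PowerSeries.coeff (R := K) k
        ((∑ i ∈ Finset.range (p + 1),
            PowerSeries.C (R := K) (at' i) * (PowerSeries.C (R := K) (pt i) - PowerSeries.X)⁻¹) *
          (∑ i ∈ Finset.range (q + 1),
            PowerSeries.C (R := K) (bt i) * (PowerSeries.C (R := K) (zt i) - PowerSeries.X)⁻¹)⁻¹) = c k := by
  set A : PowerSeries K := ∑ i ∈ Finset.range (p + 1),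
      PowerSeries.C (R := K) (at' i) * (PowerSeries.C (R := K) (pt i) - PowerSeries.X)⁻¹ with hA
  set N : PowerSeries K := ∑ i ∈ Finset.range (q + 1),
      PowerSeries.C (R := K) (bt i) * (PowerSeries.C (R := K) (zt i) - PowerSeries.X)⁻¹ with hN
  -- coefficients of A and N
  have hcoeffA : ∀ k, PowerSeries.coeff (R := K) k A = ∑ i ∈ Finset.range (p + 1), at' i / pt i ^ (k + 1) := by
    intro k
    rw [hA, map_sum]
    refine Finset.sum_congr rfl fun i hi => ?_
    rw [PowerSeries.coeff_C_mul, coeff_inv_linear _ (hptne i (Nat.lt_succ_iff.mp (Finset.mem_range.mp hi)))]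
    field_simp
  have hcoeffN : ∀ k, PowerSeries.coeff (R := K) k N = ∑ i ∈ Finset.range (q + 1), bt i / zt i ^ (k + 1) := by
    intro k
    rw [hN, map_sum]
    refine Finset.sum_congr rfl fun i hi => ?_
    rw [PowerSeries.coeff_C_mul, coeff_inv_linear _ (hztne i (Nat.lt_succ_iff.mp (Finset.mem_range.mp hi)))]
    field_simp
  have hN0 : PowerSeries.constantCoeff (R := K) N ≠ 0 := by
    have := hcoeffN 0
    rw [PowerSeries.coeff_zero_eq_constantCoeff] at this
    rw [this]
    simp only [zero_add, pow_one, hnorm]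
    exact one_ne_zero
  have hmul : (A * N⁻¹) * N = A := by
    rw [mul_assoc, PowerSeries.inv_mul_cancel _ hN0, mul_one]
  intro k hk
  induction k using Nat.strong_induction_on with
  | _ k ih =>
    have key : PowerSeries.coeff (R := K) k A = ∑ j ∈ Finset.range (k + 1),
        PowerSeries.coeff (R := K) j (A * N⁻¹) * PowerSeries.coeff (R := K) (k - j) N := by
      conv_lhs => rw [← hmul]
      rw [PowerSeries.coeff_mul,
        Finset.Nat.sum_antidiagonal_eq_sum_range_succ (fun i j =>
          PowerSeries.coeff (R := K) i (A * N⁻¹) * PowerSeries.coeff (R := K) j N)]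
    rw [Finset.sum_range_succ] at key
    have hN00 : PowerSeries.coeff (R := K) (k - k) N = 1 := by
      rw [Nat.sub_self, hcoeffN]
      simpa using hnorm
    rw [hN00, mul_one] at key
    have hih : ∀ j ∈ Finset.range k, PowerSeries.coeff (R := K) j (A * N⁻¹) * PowerSeries.coeff (R := K) (k - j) N
        = c j * ∑ i ∈ Finset.range (q + 1), bt i / zt i ^ (k - j + 1) := by
      intro j hj
      have hjk := Finset.mem_range.mp hj
      rw [ih j hjk (by omega), hcoeffN]
    rw [Finset.sum_congr rfl hih] at key
    have hsum : ∑ j ∈ Finset.range k, c j * ∑ i ∈ Finset.range (q + 1), bt i / zt i ^ (k - j + 1)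
        = ∑ i ∈ Finset.range (q + 1), bt i * ∑ j ∈ Finset.range k, c j / zt i ^ (k - j + 1) := by
      simp_rw [Finset.mul_sum]
      rw [Finset.sum_comm]
      refine Finset.sum_congr rfl fun i _ => Finset.sum_congr rfl fun j _ => ?_
      rw [div_eq_mul_inv, div_eq_mul_inv]
      ring
    rw [hcoeffA, hsum] at key
    have h := hsys k hk
    linear_combination h - key
end

section
/- Let f = Σ cₖtᵏ ∈ K[[t]], p̂₀,...,p̂_p pairwise distinct and ẑ₀,...,ẑ_q pairwise distinct scalars. If âᵢ, b̂ᵢ satisfy Σᵢ b̂ᵢ = 1 and Σᵢ âᵢ p̂ᵢᵏ − Σᵢ b̂ᵢ Σ_{j=0}^{k−1} c_j ẑᵢ^{k−j} = c_k for k = 0,...,p+q, then the power series expansion of R̂(t) = (Σᵢ âᵢ/(1 − p̂ᵢt))/(Σᵢ b̂ᵢ/(1 − ẑᵢt)) agrees with f through order p+q. -/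
open Finset

lemma geom_inv (K : Type*) [Field K] (a : K) :
    (1 - PowerSeries.C (R := K) a * PowerSeries.X)⁻¹ = PowerSeries.mk fun n => a ^ n := by
  rw [PowerSeries.inv_eq_iff_mul_eq_one (by simp)]
  ext n
  rw [mul_sub, mul_one, ← mul_assoc]
  cases n with
  | zero => simp
  | succ n =>
      simp [PowerSeries.coeff_succ_mul_X, PowerSeries.coeff_mul_C, pow_succ]

/-- Form 2 accuracy: if `∑ b̂ᵢ = 1` and
`∑ᵢ âᵢ p̂ᵢᵏ − ∑ᵢ b̂ᵢ ∑_{j<k} c_j ẑᵢ^{k−j} = c_k` for `k = 0,…,p+q`, then the expansion of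
`R̂ = (∑ âᵢ/(1 − p̂ᵢ t))/(∑ b̂ᵢ/(1 − ẑᵢ t))` agrees with `f = ∑ c_k t^k` through order
`p + q`. -/
theorem barycentric_form2_accuracy
    (K : Type*) [Field K] (p q : ℕ) (c ah bh ph zh : ℕ → K)
    (hphd : ∀ i ≤ p, ∀ j ≤ p, i ≠ j → ph i ≠ ph j)
    (hzhd : ∀ i ≤ q, ∀ j ≤ q, i ≠ j → zh i ≠ zh j)
    (hnorm : ∑ i ∈ Finset.range (q + 1), bh i = 1)
    (hsys : ∀ k ≤ p + q,
      ∑ i ∈ Finset.range (p + 1), ah i * ph i ^ k -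
        ∑ i ∈ Finset.range (q + 1),
          bh i * ∑ j ∈ Finset.range k, c j * zh i ^ (k - j) = c k) :
    ∀ k ≤ p + q,
      PowerSeries.coeff (R := K) k
        ((∑ i ∈ Finset.range (p + 1),
            PowerSeries.C (R := K) (ah i) * (1 - PowerSeries.C (R := K) (ph i) * PowerSeries.X)⁻¹) *
          (∑ i ∈ Finset.range (q + 1),
            PowerSeries.C (R := K) (bh i) * (1 - PowerSeries.C (R := K) (zh i) * PowerSeries.X)⁻¹)⁻¹) = c k := by
  set f : PowerSeries K := PowerSeries.mk c with hf
  set A : PowerSeries K := ∑ i ∈ Finset.range (p + 1),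
      PowerSeries.C (R := K) (ah i) * (1 - PowerSeries.C (R := K) (ph i) * PowerSeries.X)⁻¹ with hA
  set N : PowerSeries K := ∑ i ∈ Finset.range (q + 1),
      PowerSeries.C (R := K) (bh i) * (1 - PowerSeries.C (R := K) (zh i) * PowerSeries.X)⁻¹ with hN
  have hN0 : PowerSeries.constantCoeff (R := K) N ≠ 0 := by
    rw [hN]
    simp only [geom_inv, map_sum, map_mul, PowerSeries.constantCoeff_C]
    simp [← PowerSeries.coeff_zero_eq_constantCoeff, hnorm]
  have hAk : ∀ k, PowerSeries.coeff (R := K) k A = ∑ i ∈ Finset.range (p + 1), ah i * ph i ^ k := by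
    intro k
    simp [hA, geom_inv, PowerSeries.coeff_C_mul]
  have hNfk : ∀ k ≤ p + q, PowerSeries.coeff (R := K) k (N * f) = PowerSeries.coeff (R := K) k A := by
    intro k hk
    have hgeo : ∀ z : K, PowerSeries.coeff (R := K) k ((PowerSeries.mk fun n => z ^ n) * f) =
        (∑ j ∈ Finset.range k, c j * z ^ (k - j)) + c k := by
      intro z
      rw [mul_comm, PowerSeries.coeff_mul, Finset.Nat.sum_antidiagonal_eq_sum_range_succ_mk,
        Finset.sum_range_succ]
      simp [hf]
    rw [hN, Finset.sum_mul, map_sum]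
    have : ∀ i ∈ Finset.range (q + 1),
        PowerSeries.coeff (R := K) k
          (PowerSeries.C (R := K) (bh i) * (1 - PowerSeries.C (R := K) (zh i) * PowerSeries.X)⁻¹ * f) =
        bh i * ((∑ j ∈ Finset.range k, c j * zh i ^ (k - j)) + c k) := by
      intro i _
      rw [geom_inv, mul_assoc, PowerSeries.coeff_C_mul, hgeo]
    rw [Finset.sum_congr rfl this, hAk]
    have h := hsys k hk
    simp only [mul_add, Finset.sum_add_distrib, ← Finset.sum_mul, hnorm, one_mul]
    linear_combination -h
  -- main identity
  have key : A * N⁻¹ = f + (A - N * f) * N⁻¹ := by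
    rw [sub_mul, mul_comm N f, mul_assoc, PowerSeries.mul_inv_cancel _ hN0, mul_one]
    ring
  intro k hk
  rw [key, map_add, PowerSeries.coeff_mul]
  have hz : ∑ x ∈ Finset.HasAntidiagonal.antidiagonal k,
      PowerSeries.coeff (R := K) x.1 (A - N * f) * PowerSeries.coeff (R := K) x.2 N⁻¹ = 0 := by
    refine Finset.sum_eq_zero fun x hx => ?_
    have hx1 : x.1 ≤ p + q := le_trans (Finset.HasAntidiagonal.antidiagonal.fst_le hx) hk
    rw [map_sub, hNfk x.1 hx1, sub_self, zero_mul]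
  rw [hz, add_zero, hf, PowerSeries.coeff_mk]
end
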